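/- Consider a finite nonempty list of rank-labeled trees whose total number of nodes is n (n ≥ 1), such that each integer occurs at most twice among the ranks of the roots of the trees. Then the number of trees in the list is at most 2·(log_φ(n) + 3), where φ = (1 + √5)/2 is the golden ratio and log_φ denotes the logarithm to base φ. -/

import Mathlib

/-- `cdiv2 m` is the ceiling of `m / 2` for an integer `m`. -/
def cdiv2 (m : ℤ) : ℤ := ⌈(m : ℚ) / 2⌉

/-- A rooted tree in which every node carries an integer rank and an
ordered finite list of child subtrees. -/
inductive RTree : Type
  | node : ℤ → List RTree → RTree

/-- The rank of the root of a tree. -/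
def RTree.rank : RTree → ℤ
  | .node r _ => r

mutual
  /-- The size of a tree: its total number of nodes. -/
  def RTree.size : RTree → ℕ
    | .node _ cs => 1 + RTree.sizeList cs
  /-- The total number of nodes of a list of trees. -/
  def RTree.sizeList : List RTree → ℕ
    | [] => 0
    | t :: ts => RTree.size t + RTree.sizeList ts
end

/-- The rank of the `(i+1)`-st child from the end of the child list `cs`
(so `i = 0` gives the last child, `i = 1` the second to last), with the
convention that the rank of a missing child is `-1`. -/
def lastRank (cs : List RTree) (i : ℕ) : ℤ :=
  (cs.reverse[i]?).elim (-1) RTree.rank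

/-- A rank-labeled tree: every node `z` satisfies `r_z ≥ 0` and
`r_z ≤ ⌈(r_{z1} + r_{z2})/2⌉ + 1` where `r_{z1}`, `r_{z2}` are the ranks of the
last two children (a missing child having rank `-1`). -/
inductive RTree.Valid : RTree → Prop
  | node (r : ℤ) (cs : List RTree)
      (hr : 0 ≤ r)
      (hrank : r ≤ cdiv2 (lastRank cs 0 + lastRank cs 1) + 1)
      (hcs : ∀ t ∈ cs, RTree.Valid t) :
      RTree.Valid (RTree.node r cs)


noncomputable def gr : ℝ := (1 + Real.sqrt 5) / 2

lemma gr_sq : gr ^ 2 = gr + 1 := by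
  have h5 : Real.sqrt 5 ^ 2 = 5 := Real.sq_sqrt (by norm_num)
  unfold gr; nlinarith [Real.sqrt_nonneg 5]

lemma one_lt_gr : 1 < gr := by
  have h5 : Real.sqrt 5 ^ 2 = 5 := Real.sq_sqrt (by norm_num)
  unfold gr; nlinarith [Real.sqrt_nonneg 5]

lemma gr_pos : 0 < gr := lt_trans one_pos one_lt_gr

lemma gr_zpow_rec (r : ℤ) : gr ^ r = gr ^ (r - 1) + gr ^ (r - 2) := by
  have h0 : gr ≠ 0 := ne_of_gt gr_pos
  have : gr ^ r = gr ^ (r - 2) * gr ^ (2:ℤ) := by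
    rw [← zpow_add₀ h0]; ring_nf
  rw [this]
  have h2 : gr ^ (2:ℤ) = gr + 1 := by rw [show (2:ℤ) = (2:ℕ) from rfl, zpow_natCast, gr_sq]
  rw [h2, mul_add, mul_one]
  congr 1
  rw [← zpow_add_one₀ h0]; ring_nf

lemma key_aux (a b r : ℤ) (hab : a ≤ b) (h : 2 * r - 3 ≤ a + b) :
    gr ^ r ≤ gr ^ a + gr ^ b := by
  have hg1 := one_lt_gr.le
  by_cases hrb : r ≤ b
  · have := zpow_le_zpow_right₀ hg1 hrb
    have := zpow_pos gr_pos a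
    linarith
  · have hb : b = r - 1 := by omega
    have ha : r - 2 ≤ a := by omega
    have h1 : gr ^ (r-1) ≤ gr ^ b := by rw [hb]
    have h2 : gr ^ (r-2) ≤ gr ^ a := zpow_le_zpow_right₀ hg1 ha
    rw [gr_zpow_rec r]; linarith

lemma key (a b r : ℤ) (h : 2 * r - 3 ≤ a + b) : gr ^ r ≤ gr ^ a + gr ^ b := by
  rcases le_total a b with hab | hab
  · exact key_aux a b r hab h
  · have := key_aux b a r hab (by omega); linarith

lemma cdiv2_le (m : ℤ) : 2 * cdiv2 m ≤ m + 1 := by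
  unfold cdiv2
  have h : (⌈(m:ℚ)/2⌉ : ℚ) < (m:ℚ)/2 + 1 := Int.ceil_lt_add_one _
  have : (2 * ⌈(m:ℚ)/2⌉ : ℚ) < m + 2 := by linarith
  have h2 : (2 * ⌈(m:ℚ)/2⌉ : ℤ) < m + 2 := by exact_mod_cast this
  omega

lemma sizeList_eq (l : List RTree) : RTree.sizeList l = (l.map RTree.size).sum := by
  induction l with
  | nil => rfl
  | cons t ts ih => simp [RTree.sizeList, ih]

lemma size_pos (t : RTree) : 1 ≤ t.size := by
  cases t with
  | node r cs => simp [RTree.size]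

lemma rank_nonneg (t : RTree) (h : t.Valid) : 0 ≤ t.rank := by
  cases h with
  | node r cs hr hrank hcs => exact hr

lemma valid_size (t : RTree) (hv : t.Valid) : gr ^ (t.rank - 2) ≤ (t.size : ℝ) := by
  induction hv with
  | node r cs hr hrank hcs ih =>
    simp only [RTree.rank, RTree.size]
    have hsum : 2 * r - 3 ≤ lastRank cs 0 + lastRank cs 1 := by
      have := cdiv2_le (lastRank cs 0 + lastRank cs 1)
      omega
    have hφ3 : gr ^ (-3 : ℤ) ≤ 1/2 := by
      have h1 : (2:ℝ) ≤ gr ^ (3:ℤ) := by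
        have e : gr ^ (3:ℤ) = (gr + 1) * gr := by
          rw [show (3:ℤ) = 2 + 1 by norm_num, zpow_add₀ (ne_of_gt gr_pos), zpow_one]
          congr 1
          rw [show (2:ℤ) = ((2:ℕ):ℤ) by norm_num, zpow_natCast, gr_sq]
        rw [e]
        nlinarith [one_lt_gr, gr_pos]
      have h2 : gr ^ (-3:ℤ) = (gr ^ (3:ℤ))⁻¹ := by rw [zpow_neg]
      rw [h2]
      rw [inv_le_comm₀ (zpow_pos gr_pos 3) (by norm_num)]
      linarith
    match hrev : cs.reverse with
    | [] =>
      have hcs0 : cs = [] := by simpa using congrArg List.reverse hrev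
      subst hcs0
      have hl0 : lastRank ([]:List RTree) 0 = -1 := rfl
      have hl1 : lastRank ([]:List RTree) 1 = -1 := rfl
      rw [hl0, hl1] at hsum
      have hr0 : r ≤ 0 := by omega
      have : gr ^ (r - 2) ≤ 1 := zpow_le_one_of_nonpos₀ one_lt_gr.le (by omega)
      simp [RTree.sizeList]
      linarith
    | [t1] =>
      have hm1 : t1 ∈ cs := by rw [← List.mem_reverse, hrev]; simp
      have hl0 : lastRank cs 0 = t1.rank := by simp [lastRank, hrev]
      have hl1 : lastRank cs 1 = -1 := by simp [lastRank, hrev]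
      rw [hl0, hl1] at hsum
      have hk := key (t1.rank - 2) (-3) (r - 2) (by omega)
      have ih1 := ih t1 hm1
      have hsz : (t1.size : ℝ) ≤ (RTree.sizeList cs : ℝ) := by
        have hcs1 : cs = [t1] := by simpa using congrArg List.reverse hrev
        rw [hcs1]; simp [RTree.sizeList]
      push_cast
      linarith
    | t1 :: t2 :: rest =>
      have hm1 : t1 ∈ cs := by rw [← List.mem_reverse, hrev]; simp
      have hm2 : t2 ∈ cs := by rw [← List.mem_reverse, hrev]; simp
      have hl0 : lastRank cs 0 = t1.rank := by simp [lastRank, hrev]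
      have hl1 : lastRank cs 1 = t2.rank := by simp [lastRank, hrev]
      rw [hl0, hl1] at hsum
      have hk := key (t1.rank - 2) (t2.rank - 2) (r - 2) (by omega)
      have ih1 := ih t1 hm1
      have ih2 := ih t2 hm2
      have hcs1 : cs = rest.reverse ++ [t2, t1] := by
        have h := congrArg List.reverse hrev
        simpa using h
      have hszn : t1.size + t2.size ≤ RTree.sizeList cs := by
        rw [hcs1, sizeList_eq, List.map_append, List.sum_append]
        simp only [List.map_cons, List.map_nil, List.sum_cons, List.sum_nil]
        omega
      have hsz : ((t1.size + t2.size : ℕ) : ℝ) ≤ (RTree.sizeList cs : ℝ) := Nat.cast_le.2 hszn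
      push_cast at hsz ⊢
      linarith
/-- A nonempty list of rank-labeled trees with `n` nodes in total, in which each
integer occurs at most twice among the root ranks, has at most
`2 * (log_φ n + 3)` trees. -/
theorem num_trees_le_log (ts : List RTree) (n : ℕ) (hne : ts ≠ [])
    (hv : ∀ t ∈ ts, t.Valid)
    (hn : (ts.map RTree.size).sum = n)
    (hc : ∀ r : ℤ, (ts.map RTree.rank).count r ≤ 2) :
    (ts.length : ℝ) ≤ 2 * (Real.logb ((1 + Real.sqrt 5) / 2) (n : ℝ) + 3) := by
  classical
  set l := ts.map RTree.rank with hl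
  have hlne : l ≠ [] := by simpa [hl] using hne
  have hF : l.toFinset.Nonempty := by
    obtain ⟨x, hx⟩ := List.exists_mem_of_ne_nil l hlne
    exact ⟨x, List.mem_toFinset.2 hx⟩
  set M := l.toFinset.max' hF with hM
  have hMmem : M ∈ l := List.mem_toFinset.1 (Finset.max'_mem _ hF)
  obtain ⟨t0, ht0, hrt0⟩ := List.mem_map.1 hMmem
  have hpos : ∀ a ∈ l, 0 ≤ a := by
    intro a ha
    obtain ⟨t, ht, hrt⟩ := List.mem_map.1 ha
    exact hrt ▸ rank_nonneg t (hv t ht)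
  have hle : ∀ a ∈ l, a ≤ M := fun a ha => Finset.le_max' _ a (List.mem_toFinset.2 ha)
  have hM0 : 0 ≤ M := hpos M hMmem
  have hsub : l.toFinset ⊆ Finset.Icc 0 M := by
    intro a ha
    rw [Finset.mem_Icc]
    exact ⟨hpos a (List.mem_toFinset.1 ha), hle a (List.mem_toFinset.1 ha)⟩
  have hcard : l.toFinset.card ≤ (Finset.Icc (0:ℤ) M).card := Finset.card_le_card hsub
  have hIcc : ((Finset.Icc (0:ℤ) M).card : ℤ) = M + 1 := by
    rw [Int.card_Icc]; omega
  have hsum : ∑ a ∈ l.toFinset, l.count a = l.length := by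
    simp [Multiset.toFinset_sum_count_eq (l : Multiset ℤ)]
  have hk2 : l.length ≤ 2 * l.toFinset.card := by
    calc l.length = ∑ a ∈ l.toFinset, l.count a := hsum.symm
      _ ≤ ∑ _a ∈ l.toFinset, 2 := Finset.sum_le_sum (fun a _ => hc a)
      _ = 2 * l.toFinset.card := by rw [Finset.sum_const, smul_eq_mul, mul_comm]
  have hkM : (ts.length : ℤ) ≤ 2 * (M + 1) := by
    have hlen : l.length = ts.length := by rw [hl, List.length_map]
    have h1 : (l.length : ℤ) ≤ 2 * (l.toFinset.card : ℤ) := by exact_mod_cast hk2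
    have h2 : (l.toFinset.card : ℤ) ≤ ((Finset.Icc (0:ℤ) M).card : ℤ) := by exact_mod_cast hcard
    rw [← hlen]
    omega
  have hszn : t0.size ≤ n := by
    rw [← hn]
    exact List.single_le_sum (fun x _ => Nat.zero_le x) _ (List.mem_map_of_mem (f := RTree.size) ht0)
  have htree : gr ^ (M - 2) ≤ (n : ℝ) := by
    have h1 := valid_size t0 (hv t0 ht0)
    rw [hrt0] at h1
    exact le_trans h1 (by exact_mod_cast hszn)
  have hlg : 0 < Real.log gr := Real.log_pos one_lt_gr
  have hlog : (M : ℝ) - 2 ≤ Real.logb gr n := by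
    have h2 := Real.log_le_log (zpow_pos gr_pos _) htree
    rw [Real.log_zpow] at h2
    rw [Real.logb, le_div_iff₀ hlg]
    push_cast at h2 ⊢
    linarith
  have hkR : (ts.length : ℝ) ≤ 2 * ((M : ℝ) + 1) := by exact_mod_cast hkM
  have hgoal : Real.logb ((1 + Real.sqrt 5) / 2) (n : ℝ) = Real.logb gr n := rfl
  rw [hgoal]
  linarith
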